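/- If {f_k} is a frame for H with frame operator S_F and CS_F U* is a positive operator, then {f_k} is a (U, C)-controlled frame for H. -/

import Mathlib

open scoped ComplexInnerProductSpace ComplexOrder
open ContinuousLinearMap

lemma aux_cs {H : Type*} [NormedAddCommGroup H] [InnerProductSpace ℂ H] [CompleteSpace H]
    {T : H →L[ℂ] H} (hT : T.IsPositive) (f g : H) :
    (Complex.re ⟪T f, g⟫)^2 ≤ Complex.re ⟪T f, f⟫ * Complex.re ⟪T g, g⟫ := by
  have hsym : Complex.re ⟪T g, f⟫ = Complex.re ⟪T f, g⟫ := by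
    have h1 : ⟪T g, f⟫ = ⟪g, T f⟫ := by
      conv_lhs => rw [← hT.isSelfAdjoint.adjoint_eq]
      exact ContinuousLinearMap.adjoint_inner_left T f g
    rw [h1]
    exact inner_re_symm (𝕜 := ℂ) g (T f)
  have key : ∀ t : ℝ, 0 ≤ Complex.re ⟪T g, g⟫ * (t * t) +
      (2 * Complex.re ⟪T f, g⟫) * t + Complex.re ⟪T f, f⟫ := by
    intro t
    have h0 := (Complex.nonneg_iff.mp (hT.inner_nonneg_left (f + (t : ℂ) • g))).1
    have hexp : ⟪T (f + (t : ℂ) • g), f + (t : ℂ) • g⟫ =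
        ⟪T f, f⟫ + (t:ℂ) * ⟪T f, g⟫ + (t:ℂ) * ⟪T g, f⟫ + (t:ℂ) * ((t:ℂ) * ⟪T g, g⟫) := by
      rw [map_add, map_smul, inner_add_left, inner_add_right, inner_add_right,
        inner_smul_left, inner_smul_right, inner_smul_right, inner_smul_left]
      simp [Complex.conj_ofReal]
      ring
    rw [hexp] at h0
    simp only [RCLike.re_to_complex, Complex.add_re, Complex.mul_re, Complex.ofReal_re,
      Complex.ofReal_im] at h0
    rw [hsym] at h0
    ring_nf at h0 ⊢
    nlinarith [h0]
  have := discrim_le_zero key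
  rw [discrim] at this
  nlinarith [this]

theorem stmt_8 {H : Type*} [NormedAddCommGroup H] [InnerProductSpace ℂ H]
    [CompleteSpace H]
    (U Ui C Ci : H →L[ℂ] H)
    (hUUi : U ∘L Ui = 1) (hUiU : Ui ∘L U = 1)
    (hCCi : C ∘L Ci = 1) (hCiC : Ci ∘L C = 1)
    (F : ℕ → H) (A B : ℝ) (hA : 0 < A) (hAB : A ≤ B)
    (hframe : ∀ f : H,
      Summable (fun k => ‖⟪F k, f⟫‖ ^ 2) ∧
      A * ‖f‖ ^ 2 ≤ ∑' k, ‖⟪F k, f⟫‖ ^ 2 ∧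
      ∑' k, ‖⟪F k, f⟫‖ ^ 2 ≤ B * ‖f‖ ^ 2)
    (S : H →L[ℂ] H)
    (hS : ∀ f : H, HasSum (fun k => ⟪F k, f⟫ • F k) (S f))
    (hpos : (C ∘L S ∘L (ContinuousLinearMap.adjoint U)).IsPositive) :
    ∃ A' B' : ℝ, 0 < A' ∧ A' ≤ B' ∧ ∀ f : H, ∃ s : ℂ,
      HasSum (fun k => ⟪U (F k), f⟫ * ⟪f, C (F k)⟫) s ∧
      ((A' * ‖f‖ ^ 2 : ℝ) : ℂ) ≤ s ∧ s ≤ ((B' * ‖f‖ ^ 2 : ℝ) : ℂ) := by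
  classical
  set Ua := ContinuousLinearMap.adjoint U with hUadef
  set T := C ∘L S ∘L Ua with hTdef
  -- inner representation of S
  have hinner : ∀ x y : H, HasSum (fun k => ⟪F k, y⟫ * ⟪x, F k⟫) ⟪x, S y⟫ := by
    intro x y
    have h := (hS y).mapL (innerSL ℂ x)
    simpa [inner_smul_right] using h
  have hreal : ∀ x : H, ⟪x, S x⟫ = ((∑' k, ‖⟪F k, x⟫‖ ^ 2 : ℝ) : ℂ) := by
    intro x
    have h1 : HasSum (fun k => ((‖⟪F k, x⟫‖ ^ 2 : ℝ) : ℂ)) ⟪x, S x⟫ := by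
      have h := hinner x x
      have heq : ∀ k : ℕ, ⟪F k, x⟫ * ⟪x, F k⟫ = ((‖⟪F k, x⟫‖ ^ 2 : ℝ) : ℂ) := by
        intro k
        rw [← inner_conj_symm x (F k), Complex.mul_conj']
        push_cast
        rfl
      simpa [heq] using h
    have h2 := ((hframe x).1.hasSum).mapL Complex.ofRealCLM
    exact h1.unique h2
  have hlow : ∀ x : H, A * ‖x‖ ^ 2 ≤ Complex.re ⟪x, S x⟫ := by
    intro x
    rw [hreal x]
    simpa using (hframe x).2.1
  -- S is invertible
  have hSunit : IsUnit S := by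
    refine ContinuousLinearMap.isUnit_of_forall_le_norm_inner_map S (c := ⟨A, hA.le⟩)
      (by exact_mod_cast hA) ?_
    intro x
    have h1 := hlow x
    have h2 : Complex.re ⟪x, S x⟫ ≤ ‖⟪x, S x⟫‖ :=
      Complex.re_le_norm _
    have h3 : ‖⟪x, S x⟫‖ = ‖⟪S x, x⟫‖ := norm_inner_symm x (S x)
    change ‖x‖ ^ 2 * A ≤ ‖⟪S x, x⟫‖
    nlinarith [h1, h2, h3]
  set Si := ((hSunit.unit⁻¹ : (H →L[ℂ] H)ˣ) : H →L[ℂ] H) with hSidef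
  have hSSi : ∀ x : H, S (Si x) = x := by
    intro x
    have h : S * Si = 1 := by
      rw [← hSunit.unit_spec]
      exact hSunit.unit.mul_inv
    have h2 := DFunLike.congr_fun h x
    simpa [ContinuousLinearMap.mul_apply] using h2
  set Ti := (ContinuousLinearMap.adjoint Ui) ∘L Si ∘L Ci with hTidef
  have hUaUi : ∀ z : H, Ua (ContinuousLinearMap.adjoint Ui z) = z := by
    intro z
    have h : Ua ∘L ContinuousLinearMap.adjoint Ui
        = ContinuousLinearMap.adjoint (Ui ∘L U) :=
      (ContinuousLinearMap.adjoint_comp Ui U).symm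
    rw [hUiU] at h
    have h1 : ContinuousLinearMap.adjoint (1 : H →L[ℂ] H) = 1 := by
      rw [ContinuousLinearMap.one_def]
      exact ContinuousLinearMap.adjoint_id
    rw [h1] at h
    have := ContinuousLinearMap.ext_iff.mp h z
    simpa using this
  have hCCi' : ∀ z : H, C (Ci z) = z := by
    intro z
    have := ContinuousLinearMap.ext_iff.mp hCCi z
    simpa using this
  have hTTi : ∀ x : H, T (Ti x) = x := by
    intro x
    show (C ∘L S ∘L Ua) (((ContinuousLinearMap.adjoint Ui) ∘L Si ∘L Ci) x) = x
    simp only [ContinuousLinearMap.comp_apply]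
    rw [hUaUi, hSSi, hCCi']
  -- positivity facts for T
  have hTre : ∀ x : H, ((Complex.re ⟪T x, x⟫ : ℝ) : ℂ) = ⟪T x, x⟫ ∧ 0 ≤ Complex.re ⟪T x, x⟫ :=
    (ContinuousLinearMap.isPositive_iff_complex T).mp hpos
  -- constants
  set N := ‖Ti‖ with hN
  have hNpos : (0:ℝ) < 1 + N := by positivity
  refine ⟨(1 + N)⁻¹, (1 + N)⁻¹ + ‖T‖, by positivity, by
    nlinarith [norm_nonneg T], ?_⟩
  intro f
  set q := Complex.re ⟪T f, f⟫ with hq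
  have hqnn : 0 ≤ q := (hTre f).2
  have hfT : ⟪f, T f⟫ = ((q : ℝ) : ℂ) := by
    have h1 : ⟪f, T f⟫ = (starRingEnd ℂ) ⟪T f, f⟫ := (inner_conj_symm f (T f)).symm
    rw [h1, ← (hTre f).1, Complex.conj_ofReal]
  refine ⟨((q : ℝ) : ℂ), ?_, ?_, ?_⟩
  · -- HasSum
    have h := (hS (Ua f)).mapL ((innerSL ℂ f).comp C)
    have heq : (fun k => ((innerSL ℂ f).comp C) (⟪F k, Ua f⟫ • F k))
        = fun k => ⟪U (F k), f⟫ * ⟪f, C (F k)⟫ := by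
      funext k
      simp only [ContinuousLinearMap.comp_apply, map_smul, innerSL_apply_apply,
        inner_smul_right, smul_eq_mul]
      rw [hUadef, ContinuousLinearMap.adjoint_inner_right]
    have hval : ((innerSL ℂ f).comp C) (S (Ua f)) = ((q : ℝ) : ℂ) := by
      rw [← hfT]
      simp [hTdef]
    rw [heq, hval] at h
    exact h
  · -- lower bound
    rw [Complex.real_le_real]
    have hcs := aux_cs hpos f (Ti f)
    have h1 : Complex.re ⟪T f, Ti f⟫ = ‖f‖ ^ 2 := by
      have ha : ⟪T f, Ti f⟫ = ⟪f, T (Ti f)⟫ := by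
        conv_lhs => rw [← hpos.isSelfAdjoint.adjoint_eq]
        exact ContinuousLinearMap.adjoint_inner_left T (Ti f) f
      rw [ha, hTTi f]
      exact inner_self_eq_norm_sq (𝕜 := ℂ) f
    have h2nn : 0 ≤ Complex.re ⟪T (Ti f), Ti f⟫ := (hTre (Ti f)).2
    have h2 : Complex.re ⟪T (Ti f), Ti f⟫ ≤ N * ‖f‖ ^ 2 := by
      have hb : ⟪T (Ti f), Ti f⟫ = ⟪f, Ti f⟫ := by rw [hTTi f]
      rw [hb]
      have hc : Complex.re ⟪f, Ti f⟫ ≤ ‖⟪f, Ti f⟫‖ :=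
        Complex.re_le_norm _
      have hd : ‖⟪f, Ti f⟫‖ ≤ ‖f‖ * ‖Ti f‖ := norm_inner_le_norm f (Ti f)
      have he : ‖Ti f‖ ≤ N * ‖f‖ := Ti.le_opNorm f
      nlinarith [norm_nonneg f]
    rw [h1] at hcs
    have key : ‖f‖ ^ 2 ≤ (1 + N) * q := by
      have hQ : (0:ℝ) ≤ Complex.re ⟪T f, f⟫ := (hTre f).2
      rcases eq_or_lt_of_le (norm_nonneg f) with hf0 | hf0
      · rw [← hf0]
        rw [hq]
        nlinarith [hQ]
      · have hf2 : (0:ℝ) < ‖f‖ ^ 2 := by positivity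
        have hc2 := mul_le_mul_of_nonneg_left h2 hQ
        have hc3 : ‖f‖ ^ 2 * ‖f‖ ^ 2 ≤ ((1 + N) * Complex.re ⟪T f, f⟫) * ‖f‖ ^ 2 := by
          nlinarith [hcs, hc2, hQ, hf2]
        have h3 := le_of_mul_le_mul_right hc3 hf2
        rw [hq]
        linarith
    rw [inv_mul_le_iff₀ hNpos]
    linarith
  · -- upper bound
    rw [Complex.real_le_real]
    have h1 : q ≤ ‖⟪T f, f⟫‖ :=
      Complex.re_le_norm _
    have h2 : ‖⟪T f, f⟫‖ ≤ ‖T f‖ * ‖f‖ := norm_inner_le_norm (T f) f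
    have h3 : ‖T f‖ ≤ ‖T‖ * ‖f‖ := T.le_opNorm f
    have h4 : 0 ≤ (1 + N)⁻¹ * ‖f‖ ^ 2 := by positivity
    nlinarith [norm_nonneg f]
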